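/- arXiv:2602.19581 — 6 statements merged into one kernel-verified Lean document; each statement's English description precedes it below -/
import Mathlib

section
/- Let T be a 2×2 complex matrix. If T is normaloid, i.e., the spectral radius of T equals the operator norm (with respect to the Euclidean norm on ℂ²) of T, then T is normal (T*T = TT*). Consequently, for 2×2 complex matrices, normality and normaloidness are equivalent. -/
set_option maxHeartbeats 1000000

open Matrix ContinuousLinearMap Submodule FiniteDimensional
open scoped NNReal ENNReal

local notation "E2" => EuclideanSpace ℂ (Fin 2)
local notation "⟪" x ", " y "⟫" => @inner ℂ _ _ x y

-- eigenvector existence for spectrum elements of a CLM on finite-dim space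
lemma aux_exists_eigenvector (A : E2 →L[ℂ] E2) {z : ℂ} (hz : z ∈ spectrum ℂ A) :
    ∃ v : E2, ‖v‖ = 1 ∧ A v = z • v := by
  rw [spectrum.mem_iff] at hz
  rw [ContinuousLinearMap.isUnit_iff_bijective] at hz
  set f := algebraMap ℂ (E2 →L[ℂ] E2) z - A with hf
  have hinj : ¬ Function.Injective f := by
    intro h
    exact hz ⟨h, (LinearMap.injective_iff_surjective (f := (f : E2 →ₗ[ℂ] E2))).mp h⟩
  rw [Function.not_injective_iff] at hinj
  obtain ⟨x, y, hxy, hne⟩ := hinj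
  refine ⟨((‖x - y‖ : ℂ))⁻¹ • (x - y), ?_, ?_⟩
  · have hne0 : x - y ≠ 0 := sub_ne_zero.mpr hne
    rw [norm_smul]
    simp [norm_ne_zero_iff.mpr hne0]
  · have h0 : f (x - y) = 0 := by rw [map_sub, hxy, sub_self]
    have : A (x - y) = z • (x - y) := by
      have := h0
      simp only [hf, ContinuousLinearMap.sub_apply, Algebra.algebraMap_eq_smul_one,
        ContinuousLinearMap.smul_apply, ContinuousLinearMap.one_apply, sub_eq_zero] at this
      exact this.symm
    rw [_root_.map_smul, this, smul_comm]

lemma aux_key (A : E2 →L[ℂ] E2) (h : spectralRadius ℂ A = ‖A‖₊) :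
    star A * A = A * star A := by
  obtain ⟨z, hzmem, hz⟩ := spectrum.exists_nnnorm_eq_spectralRadius (a := A)
  rw [h] at hz
  have hz' : ‖z‖₊ = ‖A‖₊ := by exact_mod_cast hz
  by_cases hz0 : z = 0
  · have : A = 0 := by
      rw [← nnnorm_eq_zero (a := A), ← hz', hz0, nnnorm_zero]
    simp [this]
  · have hzA : ‖z‖ = ‖A‖ := congrArg (fun t : ℝ≥0 => (t : ℝ)) hz'
    obtain ⟨v, hv1, hAv⟩ := aux_exists_eigenvector A hzmem
    have hvne : v ≠ 0 := by
      intro h0; rw [h0, norm_zero] at hv1; exact zero_ne_one hv1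
    set B := ContinuousLinearMap.adjoint A with hBdef
    have hstar : star A = B := ContinuousLinearMap.star_eq_adjoint A
    have h1 : ⟪B v, v⟫ = z := by
      rw [ContinuousLinearMap.adjoint_inner_left, hAv, inner_smul_right,
        inner_self_eq_norm_sq_to_K, hv1]
      norm_num
    have hub : ‖B v‖ * ‖v‖ ≤ ‖z‖ := by
      rw [hv1, mul_one]
      calc ‖B v‖ ≤ ‖B‖ * ‖v‖ := ContinuousLinearMap.le_opNorm _ _
        _ = ‖B‖ := by rw [hv1, mul_one]
        _ = ‖A‖ := by rw [hBdef]; exact ContinuousLinearMap.adjoint.norm_map A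
        _ = ‖z‖ := hzA.symm
    have hCS : ‖⟪B v, v⟫‖ = ‖B v‖ * ‖v‖ := by
      refine le_antisymm (norm_inner_le_norm _ _) ?_
      rw [h1]
      simpa using hub
    have hBvne : B v ≠ 0 := by
      intro h0
      rw [h0] at h1
      simp only [inner_zero_left] at h1
      exact hz0 h1.symm
    obtain ⟨r, hr0, hrv⟩ := (norm_inner_eq_norm_iff hBvne hvne).mp hCS
    have hBv : B v = (starRingEnd ℂ) z • v := by
      have hBv' : B v = r⁻¹ • v := by
        conv_rhs => rw [hrv]
        rw [smul_smul, inv_mul_cancel₀ hr0, one_smul]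
      have h2 : ⟪v, B v⟫ = (starRingEnd ℂ) z := by
        rw [ContinuousLinearMap.adjoint_inner_right, hAv, inner_smul_left,
          inner_self_eq_norm_sq_to_K, hv1]
        norm_num
      rw [hBv', inner_smul_right, inner_self_eq_norm_sq_to_K, hv1] at h2
      norm_num at h2
      rw [hBv', h2]
    set K := (ℂ ∙ v)ᗮ with hK
    have hdim : Module.finrank ℂ K = 1 := by
      have h2 := Submodule.finrank_add_finrank_orthogonal (K := (ℂ ∙ v))
      rw [finrank_span_singleton hvne, finrank_euclideanSpace_fin, ← hK] at h2
      omega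
    obtain ⟨w, hwK, hwne⟩ := Submodule.exists_mem_ne_zero_of_ne_bot (p := K) (by
      intro hbot
      rw [hbot, finrank_bot] at hdim
      exact absurd hdim zero_ne_one)
    have hKw : K = (ℂ ∙ w) := by
      refine (Submodule.eq_of_le_of_finrank_eq ?_ ?_).symm
      · rw [Submodule.span_le]; simpa using hwK
      · rw [finrank_span_singleton hwne, hdim]
    have hvw : ⟪v, w⟫ = 0 :=
      Submodule.mem_orthogonal_singleton_iff_inner_right.mp hwK
    have hAwK : A w ∈ K := by
      rw [hK, Submodule.mem_orthogonal_singleton_iff_inner_right,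
        ← ContinuousLinearMap.adjoint_inner_left, ← hBdef, hBv, inner_smul_left, hvw]
      ring
    have hBwK : B w ∈ K := by
      rw [hK, Submodule.mem_orthogonal_singleton_iff_inner_right, hBdef,
        ContinuousLinearMap.adjoint_inner_right, hAv, inner_smul_left, hvw]
      ring
    obtain ⟨μ, hμ⟩ := Submodule.mem_span_singleton.mp (hKw ▸ hAwK)
    obtain ⟨ν, hν⟩ := Submodule.mem_span_singleton.mp (hKw ▸ hBwK)
    have hνμ : ν = (starRingEnd ℂ) μ := by
      have e1 : ⟪w, B w⟫ = ν * ⟪w, w⟫ := by rw [← hν, inner_smul_right]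
      have e2 : ⟪w, B w⟫ = (starRingEnd ℂ) μ * ⟪w, w⟫ := by
        rw [ContinuousLinearMap.adjoint_inner_right, ← hμ, inner_smul_left]
      exact mul_right_cancel₀ (inner_self_ne_zero.mpr hwne) (e1.symm.trans e2)
    ext x
    have hx : x ∈ (ℂ ∙ v) ⊔ K := by
      rw [hK, Submodule.sup_orthogonal_of_hasOrthogonalProjection]
      trivial
    obtain ⟨a, ha, b, hb, rfl⟩ := Submodule.mem_sup.mp hx
    obtain ⟨s, rfl⟩ := Submodule.mem_span_singleton.mp ha
    rw [hKw] at hb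
    obtain ⟨t, rfl⟩ := Submodule.mem_span_singleton.mp hb
    simp only [ContinuousLinearMap.mul_apply, hstar, map_add, _root_.map_smul,
      hAv, hBv, ← hμ, ← hν, smul_smul, hνμ]
    ring_nf


theorem stmt_1 (T : Matrix (Fin 2) (Fin 2) ℂ) :
    spectralRadius ℂ T = ‖Matrix.toEuclideanCLM (𝕜 := ℂ) (n := Fin 2) T‖₊ ↔
      Tᴴ * T = T * Tᴴ := by
  set A := Matrix.toEuclideanCLM (𝕜 := ℂ) (n := Fin 2) T with hA
  have hspec : spectrum ℂ T = spectrum ℂ A :=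
    (AlgEquiv.spectrum_eq (Matrix.toEuclideanCLM (𝕜 := ℂ) (n := Fin 2)) T).symm
  have hrad : spectralRadius ℂ T = spectralRadius ℂ A := by
    unfold spectralRadius; rw [hspec]
  have hstarT : Matrix.toEuclideanCLM (𝕜 := ℂ) (n := Fin 2) Tᴴ = star A := by
    rw [← Matrix.star_eq_conjTranspose, map_star]
  have hinj : Function.Injective (Matrix.toEuclideanCLM (𝕜 := ℂ) (n := Fin 2)) :=
    (Matrix.toEuclideanCLM (𝕜 := ℂ) (n := Fin 2)).injective
  constructor
  · intro h
    rw [hrad] at h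
    -- forward direction: normaloid implies normal
    have key : star A * A = A * star A := aux_key A h
    apply hinj
    rw [_root_.map_mul, _root_.map_mul, hstarT, key]
  · intro hT
    have hnormal : IsStarNormal A := by
      constructor
      rw [Commute, SemiconjBy, ← hstarT, ← _root_.map_mul, ← _root_.map_mul, ← hT]
    rw [hrad]
    exact IsStarNormal.spectralRadius_eq_nnnorm A
end

section
/- Let H be a complex Hilbert space and T a bounded linear operator on H that is normaloid. If T^n = λ·I for some n ∈ ℕ, n ≥ 1, and some λ ∈ ℂ, then T is normal. Moreover, if T ≠ 0, then T = μ·W for some nonzero scalar μ ∈ ℂ and some unitary operator W on H. -/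
open ContinuousLinearMap

variable {H : Type*} [NormedAddCommGroup H] [InnerProductSpace ℂ H] [CompleteSpace H]

/-- `|T| = (T^*T)^{1/2}`, via the continuous functional calculus. -/
noncomputable def opAbs (T : H →L[ℂ] H) : H →L[ℂ] H :=
  cfc Real.sqrt (adjoint T * T)

/-- The real power `A^s` of a (positive) operator, via the continuous functional calculus. -/
noncomputable def opPow (A : H →L[ℂ] H) (s : ℝ) : H →L[ℂ] H :=
  cfc (fun x : ℝ => x ^ s) A

/-- `T` is absolute-`(p,r)`-paranormal if
`‖ |T|^p |T^*|^r x ‖^r ≥ ‖ |T^*|^r x ‖^(p+r)` for every unit vector `x`. -/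
def AbsPRParanormal (p r : ℝ) (T : H →L[ℂ] H) : Prop :=
  ∀ x : H, ‖x‖ = 1 →
    ‖opPow (opAbs (adjoint T)) r x‖ ^ (p + r) ≤
      ‖opPow (opAbs T) p (opPow (opAbs (adjoint T)) r x)‖ ^ r

open scoped ENNReal NNReal in
theorem stmt_2 (T : H →L[ℂ] H)
    (hnl : spectralRadius ℂ T = ‖T‖₊)
    (n : ℕ) (hn : 1 ≤ n) (lam : ℂ) (hpow : T ^ n = lam • (1 : H →L[ℂ] H)) :
    adjoint T * T = T * adjoint T ∧
      (T ≠ 0 → ∃ (μ : ℂ) (W : H →L[ℂ] H),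
        μ ≠ 0 ∧ W ∈ unitary (H →L[ℂ] H) ∧ T = μ • W) := by
  rcases subsingleton_or_nontrivial H with hsub | hnt
  · have : Subsingleton (H →L[ℂ] H) := ⟨fun f g => by ext x; exact Subsingleton.elim _ _⟩
    exact ⟨Subsingleton.elim _ _, fun hT => absurd (Subsingleton.elim T 0) hT⟩
  obtain ⟨k, rfl⟩ : ∃ k, n = k + 1 := ⟨n - 1, (Nat.succ_pred_eq_of_pos hn).symm⟩
  -- `‖T‖₊ ^ n ≤ ‖T ^ n‖₊` by normaloidity
  have key : (‖T‖₊ : ℝ≥0∞) ^ (k + 1) ≤ (‖T ^ (k + 1)‖₊ : ℝ≥0∞) := by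
    have h := spectrum.spectralRadius_le_pow_nnnorm_pow_one_div ℂ T k
    rw [hnl, nnnorm_one, ENNReal.coe_one, ENNReal.one_rpow, mul_one] at h
    have h2 := ENNReal.rpow_le_rpow h (by positivity : (0:ℝ) ≤ ((k:ℝ) + 1))
    rw [← ENNReal.rpow_natCast (‖T‖₊ : ℝ≥0∞) (k+1), ← ENNReal.rpow_mul] at *
    have hne : ((k : ℝ) + 1) ≠ 0 := by positivity
    rw [one_div, inv_mul_cancel₀ hne, ENNReal.rpow_one] at h2
    simpa using h2
  have key' : ‖T‖₊ ^ (k + 1) ≤ ‖T ^ (k + 1)‖₊ := by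
    exact_mod_cast key
  have hTn : ‖T ^ (k + 1)‖₊ = ‖lam‖₊ := by
    rw [hpow, nnnorm_smul, nnnorm_one, mul_one]
  have key'' : ‖T‖₊ ^ (k + 1) = ‖lam‖₊ :=
    le_antisymm (hTn ▸ key') (by rw [← hTn]; exact nnnorm_pow_le' T (Nat.succ_pos k))
  rcases eq_or_ne lam 0 with rfl | hlam
  · -- then T = 0
    have hT0 : T = 0 := by
      have : ‖T‖₊ = 0 := by
        have := key''
        rw [nnnorm_zero, pow_eq_zero_iff (Nat.succ_ne_zero k)] at this
        exact this
      simpa using (nnnorm_eq_zero.mp this)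
    subst hT0
    simp
  · obtain ⟨μ, hμ⟩ := IsAlgClosed.exists_pow_nat_eq lam (Nat.succ_pos k)
    have hμ0 : μ ≠ 0 := fun h => hlam (by rw [← hμ, h, zero_pow (Nat.succ_ne_zero k)])
    have hnormT : ‖T‖₊ = ‖μ‖₊ := by
      have h1 : ‖T‖₊ ^ (k + 1) = ‖μ‖₊ ^ (k + 1) := by
        rw [key'', ← hμ, nnnorm_pow]
      exact (pow_left_inj₀ zero_le zero_le (Nat.succ_ne_zero k)).mp h1
  -- the candidate unitary
    set S : H →L[ℂ] H := μ⁻¹ • T with hS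
    have hSpow : S ^ (k + 1) = 1 := by
      rw [hS, smul_pow, hpow, ← hμ, smul_smul, inv_pow, inv_mul_cancel₀ (pow_ne_zero _ hμ0),
        one_smul]
    have hSn : ‖S‖ = 1 := by
      have : ‖T‖ = ‖μ‖ := congrArg NNReal.toReal hnormT
      rw [hS, norm_smul, norm_inv, this, inv_mul_cancel₀ (norm_ne_zero_iff.mpr hμ0)]
    have hSkS : S ^ k * S = 1 := by rw [← pow_succ, hSpow]
    have hSSk : S * S ^ k = 1 := by rw [← pow_succ', hSpow]
    have hiso : ∀ x : H, ‖S x‖ = ‖x‖ := by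
      intro x
      have hle : ‖S x‖ ≤ ‖x‖ := by
        calc ‖S x‖ ≤ ‖S‖ * ‖x‖ := S.le_opNorm x
        _ = ‖x‖ := by rw [hSn, one_mul]
      have hge : ‖x‖ ≤ ‖S x‖ := by
        have hk : ‖S ^ k‖ ≤ 1 := by
          calc ‖S ^ k‖ ≤ ‖S‖ ^ k := norm_pow_le S k
          _ = 1 := by rw [hSn, one_pow]
        calc ‖x‖ = ‖(S ^ k) (S x)‖ := by
              rw [← ContinuousLinearMap.mul_apply, hSkS, ContinuousLinearMap.one_apply]
        _ ≤ ‖S ^ k‖ * ‖S x‖ := (S ^ k).le_opNorm _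
        _ ≤ 1 * ‖S x‖ := by gcongr
        _ = ‖S x‖ := one_mul _
      exact le_antisymm hle hge
    have hinner : ∀ x y : H, inner ℂ (S x) (S y) = (inner ℂ x y : ℂ) := by
      intro x y
      exact (⟨S.toLinearMap, hiso⟩ : H →ₗᵢ[ℂ] H).inner_map_map x y
    have hadj : adjoint S * S = 1 := by
      ext x
      apply ext_inner_right ℂ
      intro y
      rw [ContinuousLinearMap.mul_apply, adjoint_inner_left, ContinuousLinearMap.one_apply]
      exact hinner x y
    have hadjS : adjoint S = S ^ k := by
      calc adjoint S = adjoint S * (S * S ^ k) := by rw [hSSk, mul_one]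
      _ = (adjoint S * S) * S ^ k := by rw [mul_assoc]
      _ = S ^ k := by rw [hadj, one_mul]
    have hadj2 : S * adjoint S = 1 := by rw [hadjS, hSSk]
    have hTS : T = μ • S := by
      rw [hS, smul_smul, mul_inv_cancel₀ hμ0, one_smul]
    have hadjT : adjoint T = (starRingEnd ℂ μ) • adjoint S := by
      rw [hTS, ← ContinuousLinearMap.star_eq_adjoint, ← ContinuousLinearMap.star_eq_adjoint,
        star_smul]
      rfl
    constructor
    · rw [hadjT, hTS, smul_mul_smul_comm, smul_mul_smul_comm, hadj, hadj2, mul_comm]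
    · intro _
      refine ⟨μ, S, hμ0, ?_, hTS⟩
      rw [Unitary.mem_iff, ContinuousLinearMap.star_eq_adjoint]
      exact ⟨hadj, hadj2⟩
end

section
/- Let H be a complex Hilbert space and T a bounded linear operator on H satisfying TT* ≤ λ·T*T for some λ > 0. If T is binormal, i.e., T*T commutes with TT*, then T^n (T*)^n ≤ λ^{n²} (T*)^n T^n for every n ∈ ℕ, n ≥ 1. -/
set_option synthInstance.maxHeartbeats 400000
set_option maxHeartbeats 1000000

open ContinuousLinearMap Polynomial

variable {H : Type*} [NormedAddCommGroup H] [InnerProductSpace ℂ H] [CompleteSpace H]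


lemma commute_aeval {a b : H →L[ℂ] H} (hab : Commute a b) (p : ℝ[X]) :
    Commute b (aeval a p) := by
  induction p using Polynomial.induction_on' with
  | add p q hp hq => simpa [map_add] using hp.add_right hq
  | monomial n c =>
      rw [aeval_monomial]
      exact (Algebra.commute_algebraMap_right c b).mul_right (hab.symm.pow_right n)

lemma commute_cfc {a b : H →L[ℂ] H} (hab : Commute a b) (f : ℝ → ℝ) :
    Commute b (cfc f a) := by
  refine cfc_cases (fun x => Commute b x) a f (Commute.zero_right b) fun hf ha => ?_
  suffices key : ∀ g : C(spectrum ℝ a, ℝ), Commute b (cfcHom ha g) from key _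
  intro g
  have hcont : Continuous (cfcHom ha (R := ℝ)) := (cfcHom_isClosedEmbedding ha).continuous
  have hclosed : IsClosed {g : C(spectrum ℝ a, ℝ) | Commute b (cfcHom ha g)} :=
    isClosed_eq ((continuous_mul_left b).comp hcont) ((continuous_mul_right b).comp hcont)
  have hpoly : (polynomialFunctions (spectrum ℝ a) : Set C(spectrum ℝ a, ℝ)) ⊆
      {g : C(spectrum ℝ a, ℝ) | Commute b (cfcHom ha g)} := by
    intro g hg
    rw [polynomialFunctions_coe] at hg
    obtain ⟨p, rfl⟩ := hg
    have : cfcHom ha (toContinuousMapOnAlgHom (spectrum ℝ a) p) = aeval a p := by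
      have h1 := aeval_algHom_apply
        (((cfcHom ha (R := ℝ)).toAlgHom).comp (toContinuousMapOnAlgHom (spectrum ℝ a))) X p
      simp only [aeval_X_left_apply] at h1
      simp only [AlgHom.coe_comp, StarAlgHom.coe_toAlgHom, Function.comp_apply,
        toContinuousMapOnAlgHom_apply, toContinuousMapOn_X_eq_restrict_id, cfcHom_id ha] at h1
      exact h1.symm
    rw [Set.mem_setOf_eq, this]
    exact commute_aeval hab p
  have hg : g ∈ closure (polynomialFunctions (spectrum ℝ a) : Set C(spectrum ℝ a, ℝ)) := by
    rw [← Subalgebra.topologicalClosure_coe, polynomialFunctions.topologicalClosure]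
    trivial
  exact hclosed.closure_subset_iff.mpr hpoly hg


lemma mul_nonneg_of_commute' {a b : H →L[ℂ] H} (ha : 0 ≤ a) (hb : 0 ≤ b)
    (hab : Commute a b) : 0 ≤ a * b := by
  have hsa : IsSelfAdjoint a := .of_nonneg ha
  set s := cfc Real.sqrt a with hs_def
  have hs : 0 ≤ s := cfc_nonneg fun x _ => Real.sqrt_nonneg x
  have hss : s * s = a := by
    rw [hs_def, ← cfc_mul _ _ a (by fun_prop) (by fun_prop)]
    calc cfc (fun x => Real.sqrt x * Real.sqrt x) a = cfc (fun x : ℝ => x) a :=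
          cfc_congr fun x hx => Real.mul_self_sqrt (spectrum_nonneg_of_nonneg ha hx)
      _ = a := cfc_id' ℝ a
  have hcs : Commute b s := commute_cfc hab Real.sqrt
  have key : a * b = star s * b * s := by
    calc a * b = s * (s * b) := by rw [← hss, mul_assoc]
      _ = s * (b * s) := by rw [hcs.eq]
      _ = star s * b * s := by rw [(IsSelfAdjoint.of_nonneg hs).star_eq, mul_assoc]
  rw [key]
  exact star_left_conjugate_nonneg hb s

lemma real_smul_nonneg {c : ℝ} (hc : 0 ≤ c) {x : H →L[ℂ] H} (hx : 0 ≤ x) : 0 ≤ c • x := by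
  have h := star_left_conjugate_nonneg hx ((((Real.sqrt c : ℝ) : ℂ)) • (1 : H →L[ℂ] H))
  have hstar : star ((((Real.sqrt c : ℝ) : ℂ)) • (1 : H →L[ℂ] H))
      = (((Real.sqrt c : ℝ) : ℂ)) • (1 : H →L[ℂ] H) := by
    simp [star_smul, Complex.conj_ofReal]
  rw [hstar, smul_mul_assoc, one_mul, mul_smul_comm, mul_one, smul_smul,
    ← Complex.ofReal_mul, Real.mul_self_sqrt hc,
    show ((c : ℂ)) = c • (1 : ℂ) by simp, smul_assoc, one_smul] at h
  exact h

lemma real_smul_le_smul {c : ℝ} (hc : 0 ≤ c) {x y : H →L[ℂ] H} (h : x ≤ y) :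
    c • x ≤ c • y := by
  rw [← sub_nonneg, ← smul_sub]
  exact real_smul_nonneg hc (sub_nonneg.2 h)

lemma conj_pow' {M : Type*} [Monoid M] (x y : M) (k : ℕ) :
    x * (y * x) ^ k * y = (x * y) ^ (k + 1) := by
  induction k with
  | zero => simp
  | succ k ih =>
    rw [pow_succ]
    calc x * ((y * x) ^ k * (y * x)) * y = (x * (y * x) ^ k * y) * (x * y) := by
          simp only [mul_assoc]
      _ = (x * y) ^ (k + 1) * (x * y) := by rw [ih]
      _ = (x * y) ^ (k + 2) := (pow_succ _ _).symm


theorem stmt_6 (T : H →L[ℂ] H) (lam : ℝ) (hlam : 0 < lam)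
    (hle : (lam • (adjoint T * T) - T * adjoint T).IsPositive)
    (hbin : (adjoint T * T) * (T * adjoint T) = (T * adjoint T) * (adjoint T * T))
    (n : ℕ) (hn : 1 ≤ n) :
    (lam ^ n ^ 2 • (adjoint T ^ n * T ^ n) - T ^ n * adjoint T ^ n).IsPositive := by
  simp only [← star_eq_adjoint] at hle hbin ⊢
  rw [← ContinuousLinearMap.le_def]
  set S := star T with hS
  set A := S * T with hA_def
  set B := T * S with hB_def
  have hc : Commute A B := hbin
  have hA : 0 ≤ A := star_mul_self_nonneg T
  have hB : 0 ≤ B := mul_star_self_nonneg T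
  have hle' : B ≤ lam • A := (ContinuousLinearMap.le_def _ _).mpr hle
  have hlamA : 0 ≤ lam • A := hB.trans hle'
  have hBpow : ∀ k, 0 ≤ B ^ k := by
    intro k
    induction k with
    | zero => simpa using star_mul_self_nonneg (1 : H →L[ℂ] H)
    | succ k ih =>
      rw [pow_succ]
      exact mul_nonneg_of_commute' ih hB ((Commute.refl B).pow_left k)
  -- powers comparison
  have key1 : ∀ k, B ^ k ≤ lam ^ k • A ^ k := by
    intro k
    induction k with
    | zero => simp
    | succ k ih =>
      have comm1 : Commute (lam ^ k • A ^ k - B ^ k) (lam • A) :=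
        (((((Commute.refl A).pow_left k).smul_right lam).smul_left (lam ^ k))).sub_left
          ((hc.symm.pow_left k).smul_right lam)
      have comm2 : Commute (B ^ k) (lam • A - B) :=
        ((hc.symm.pow_left k).smul_right lam).sub_right ((Commute.refl B).pow_left k)
      have h1 : 0 ≤ (lam ^ k • A ^ k - B ^ k) * (lam • A) :=
        mul_nonneg_of_commute' (sub_nonneg.2 ih) hlamA comm1
      have h2 : 0 ≤ B ^ k * (lam • A - B) :=
        mul_nonneg_of_commute' (hBpow k) (sub_nonneg.2 hle') comm2
      have h3 := add_nonneg h1 h2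
      rw [← sub_nonneg]
      convert h3 using 1
      simp only [sub_mul, mul_sub, smul_mul_assoc, mul_smul_comm, smul_sub, smul_smul,
        ← pow_succ, ← pow_succ']
      abel
  have hTB : ∀ m, T * A ^ m * S = B ^ (m + 1) := fun m => conj_pow' T S m
  have hSA : ∀ m, S * B ^ m * T = A ^ (m + 1) := fun m => conj_pow' S T m
  have claim1 : ∀ k, k ≤ n →
      T ^ n * S ^ n ≤ lam ^ (∑ i ∈ Finset.range k, i) •
        (T ^ (n - k) * B ^ k * S ^ (n - k)) := by
    intro k hk
    induction k with
    | zero => simp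
    | succ k ih =>
      have hk' : k ≤ n := Nat.le_of_succ_le hk
      have step : T ^ (n - k) * B ^ k * S ^ (n - k) ≤
          lam ^ k • (T ^ (n - (k + 1)) * B ^ (k + 1) * S ^ (n - (k + 1))) := by
        have h1 := star_right_conjugate_le_conjugate (key1 k) (T ^ (n - k))
        rw [star_pow, ← hS] at h1
        refine h1.trans_eq ?_
        have hnk : n - k = (n - (k + 1)) + 1 := by omega
        rw [hnk, pow_succ T, pow_succ' S, mul_smul_comm, smul_mul_assoc]
        congr 1
        calc T ^ (n - (k+1)) * T * A ^ k * (S * S ^ (n - (k+1)))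
            = T ^ (n - (k+1)) * (T * A ^ k * S) * S ^ (n - (k+1)) := by
              simp only [mul_assoc]
          _ = T ^ (n - (k+1)) * B ^ (k + 1) * S ^ (n - (k+1)) := by rw [hTB k]
      calc T ^ n * S ^ n ≤ lam ^ (∑ i ∈ Finset.range k, i) •
            (T ^ (n - k) * B ^ k * S ^ (n - k)) := ih hk'
        _ ≤ lam ^ (∑ i ∈ Finset.range k, i) •
            (lam ^ k • (T ^ (n - (k + 1)) * B ^ (k + 1) * S ^ (n - (k + 1)))) :=
            real_smul_le_smul (pow_nonneg hlam.le _) step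
        _ = lam ^ (∑ i ∈ Finset.range (k + 1), i) •
            (T ^ (n - (k + 1)) * B ^ (k + 1) * S ^ (n - (k + 1))) := by
            rw [smul_smul, ← pow_add, Finset.sum_range_succ]
  have claim2 : ∀ k, k ≤ n →
      A ^ n ≤ lam ^ (∑ i ∈ Finset.range k, (n - 1 - i)) •
        (S ^ k * A ^ (n - k) * T ^ k) := by
    intro k hk
    induction k with
    | zero => simp
    | succ k ih =>
      have hk' : k ≤ n := Nat.le_of_succ_le hk
      have hnk : n - k = (n - (k + 1)) + 1 := by omega
      have step : S ^ k * A ^ (n - k) * T ^ k ≤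
          lam ^ (n - 1 - k) • (S ^ (k + 1) * A ^ (n - (k + 1)) * T ^ (k + 1)) := by
        have heq : S ^ k * A ^ (n - k) * T ^ k
            = S ^ (k + 1) * B ^ (n - (k + 1)) * T ^ (k + 1) := by
          rw [hnk, ← hSA (n - (k+1)), pow_succ S, pow_succ' T]
          simp only [mul_assoc]
        have h1 := star_left_conjugate_le_conjugate (key1 (n - (k + 1))) (T ^ (k + 1))
        rw [star_pow, ← hS] at h1
        rw [heq]
        refine h1.trans_eq ?_
        rw [mul_smul_comm, smul_mul_assoc]
        congr 2
        omega
      calc A ^ n ≤ lam ^ (∑ i ∈ Finset.range k, (n - 1 - i)) •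
            (S ^ k * A ^ (n - k) * T ^ k) := ih hk'
        _ ≤ lam ^ (∑ i ∈ Finset.range k, (n - 1 - i)) •
            (lam ^ (n - 1 - k) • (S ^ (k + 1) * A ^ (n - (k + 1)) * T ^ (k + 1))) :=
            real_smul_le_smul (pow_nonneg hlam.le _) step
        _ = _ := by rw [smul_smul, ← pow_add, Finset.sum_range_succ]
  have c1 := claim1 n le_rfl
  have c3 := claim2 n le_rfl
  simp only [Nat.sub_self, pow_zero, one_mul, mul_one] at c1 c3
  have e1 : T ^ n * S ^ n ≤
      lam ^ ((∑ i ∈ Finset.range n, i) + n + (∑ i ∈ Finset.range n, (n - 1 - i))) •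
        (S ^ n * T ^ n) := by
    calc T ^ n * S ^ n ≤ lam ^ (∑ i ∈ Finset.range n, i) • B ^ n := c1
      _ ≤ lam ^ (∑ i ∈ Finset.range n, i) • (lam ^ n • A ^ n) :=
          real_smul_le_smul (pow_nonneg hlam.le _) (key1 n)
      _ ≤ lam ^ (∑ i ∈ Finset.range n, i) • (lam ^ n •
          (lam ^ (∑ i ∈ Finset.range n, (n - 1 - i)) • (S ^ n * T ^ n))) :=
          real_smul_le_smul (pow_nonneg hlam.le _)
            (real_smul_le_smul (pow_nonneg hlam.le _) c3)
      _ = _ := by rw [smul_smul, smul_smul, ← pow_add, ← pow_add]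
  have hexp : (∑ i ∈ Finset.range n, i) + n + (∑ i ∈ Finset.range n, (n - 1 - i)) = n ^ 2 := by
    have h4 : (∑ i ∈ Finset.range n, i) + (∑ i ∈ Finset.range n, (n - 1 - i))
        = ∑ _i ∈ Finset.range n, (n - 1) := by
      rw [← Finset.sum_add_distrib]
      exact Finset.sum_congr rfl fun i hi => by
        have := Finset.mem_range.mp hi; omega
    rw [Finset.sum_const, smul_eq_mul, Finset.card_range] at h4
    have h5 : n * (n - 1) + n = n ^ 2 := by
      cases n with
      | zero => simp
      | succ m => simp [pow_two]; ring
    omega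
  rw [hexp] at e1
  exact e1
end

section
/- Let H be a complex Hilbert space, p, r > 0, and let T be a bounded linear operator on H that is absolute-(p,r)-paranormal. If T² is a compact operator, then T is a compact operator. -/
open ContinuousLinearMap

variable {H : Type*} [NormedAddCommGroup H] [InnerProductSpace ℂ H] [CompleteSpace H]

open Filter Metric Real Topology

section Aux

private lemma contRpowConst {s : ℝ} (hs : 0 ≤ s) : Continuous fun x : ℝ => x ^ s :=
  continuous_iff_continuousAt.2 fun x => Real.continuousAt_rpow_const x s (Or.inr hs)

private lemma rpow_succ' {x : ℝ} (hx : 0 < x) (t : ℝ) : x * x ^ t = x ^ (t + 1) := by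
  rw [Real.rpow_add hx, Real.rpow_one, mul_comm]

private lemma rpow_split {s : ℝ} (hs : 1 ≤ s) {x : ℝ} (hx : 0 ≤ x) :
    x ^ s = x ^ (s - 1) * x := by
  rcases eq_or_lt_of_le hx with h | h
  · rcases eq_or_lt_of_le hs with h1 | h1
    · rw [← h, ← h1]; simp
    · rw [← h, Real.zero_rpow (by linarith : s ≠ 0),
        Real.zero_rpow (by linarith : s - 1 ≠ 0)]; ring
  · rw [mul_comm, rpow_succ' h, sub_add_cancel]

private lemma approx_bound {s ε u : ℝ} (hs : 0 < s) (hs1 : s < 1) (hε : 0 < ε) (hu : 0 ≤ u) :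
    |u ^ s - u * (u + ε) ^ (s - 1)| ≤ ε ^ s := by
  have huε : 0 < u + ε := by linarith
  have hlow : u * (u + ε) ^ (s - 1) ≤ u ^ s := by
    rcases eq_or_lt_of_le hu with h | h
    · rw [← h, Real.zero_rpow hs.ne', zero_mul]
    · calc u * (u + ε) ^ (s - 1) ≤ u * u ^ (s - 1) :=
            mul_le_mul_of_nonneg_left
              (Real.rpow_le_rpow_of_nonpos h (by linarith) (by linarith)) hu
        _ = u ^ s := by rw [rpow_succ' h, sub_add_cancel]
  have hup : u ^ s - u * (u + ε) ^ (s - 1) ≤ ε ^ s := by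
    have h1 : u ^ s ≤ (u + ε) ^ s := Real.rpow_le_rpow hu (by linarith) hs.le
    have h2 : (u + ε) * (u + ε) ^ (s - 1) = (u + ε) ^ s := by
      rw [rpow_succ' huε, sub_add_cancel]
    have h3 : (u + ε) ^ (s - 1) ≤ ε ^ (s - 1) :=
      Real.rpow_le_rpow_of_nonpos hε (by linarith) (by linarith)
    have h4 : ε * ε ^ (s - 1) = ε ^ s := by rw [rpow_succ' hε, sub_add_cancel]
    nlinarith [mul_le_mul_of_nonneg_left h3 hε.le]
  have h0 : 0 ≤ ε ^ s := Real.rpow_nonneg hε.le s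
  rw [abs_le]
  constructor <;> linarith

private lemma spec_subset_nonneg {a : H →L[ℂ] H} (ha : 0 ≤ a) :
    spectrum ℝ a ⊆ Set.Ici (0 : ℝ) :=
  fun _ hx => spectrum_nonneg_of_nonneg ha hx

private lemma contOn_shift_rpow {a : H →L[ℂ] H} (ha : 0 ≤ a) {ε : ℝ} (hε : 0 < ε) (t : ℝ) :
    ContinuousOn (fun x : ℝ => (x + ε) ^ t) (spectrum ℝ a) := by
  intro x hx
  have hx0 : 0 ≤ x := spectrum_nonneg_of_nonneg ha hx
  have : ContinuousAt (fun x : ℝ => (x + ε) ^ t) x :=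
    (continuousAt_id.add continuousAt_const).rpow_const (Or.inl (ne_of_gt (by show 0 < x + ε; positivity)))
  exact this.continuousWithinAt

private lemma contOn_mul_shift_rpow {a : H →L[ℂ] H} (ha : 0 ≤ a) {ε : ℝ} (hε : 0 < ε) (t : ℝ) :
    ContinuousOn (fun x : ℝ => x * (x + ε) ^ t) (spectrum ℝ a) :=
  continuousOn_id.mul (contOn_shift_rpow ha hε t)

private lemma tendsto_eps_rpow {s : ℝ} (hs : 0 < s) :
    Tendsto (fun n : ℕ => (((n : ℝ) + 1)⁻¹) ^ s) atTop (𝓝 0) := by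
  have h1 : Tendsto (fun n : ℕ => ((n : ℝ) + 1)⁻¹) atTop (𝓝 0) := by
    simpa [one_div] using tendsto_one_div_add_atTop_nhds_zero_nat (𝕜 := ℝ)
  have h2 := ((contRpowConst hs.le).tendsto 0).comp h1
  simpa [Function.comp_def, Real.zero_rpow hs.ne'] using h2

/-- If `a ≥ 0`, the difference between `x ^ s` and its regularization is uniformly small. -/
private lemma cfc_rpow_approx {a : H →L[ℂ] H} (ha : 0 ≤ a) {s ε : ℝ}
    (hs : 0 < s) (hs1 : s < 1) (hε : 0 < ε) :
    ‖cfc (fun x : ℝ => x ^ s) a - cfc (fun x : ℝ => x * (x + ε) ^ (s - 1)) a‖ ≤ ε ^ s := by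
  have haSA : IsSelfAdjoint a := IsSelfAdjoint.of_nonneg ha
  rw [← cfc_sub (fun x : ℝ => x ^ s) (fun x : ℝ => x * (x + ε) ^ (s - 1)) a
    ((contRpowConst hs.le).continuousOn) (contOn_mul_shift_rpow ha hε _)]
  refine norm_cfc_le (Real.rpow_nonneg hε.le s) fun x hx => ?_
  have hx0 : 0 ≤ x := spectrum_nonneg_of_nonneg ha hx
  simpa [Real.norm_eq_abs] using approx_bound hs hs1 hε hx0

private lemma cfc_mul_id {a : H →L[ℂ] H} (ha : IsSelfAdjoint a) {f : ℝ → ℝ}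
    (hf : ContinuousOn f (spectrum ℝ a)) :
    cfc (fun x : ℝ => f x * x) a = cfc f a * a := by
  have h := cfc_mul f id a hf continuousOn_id
  rwa [cfc_id ℝ a] at h

private lemma id_mul_cfc {a : H →L[ℂ] H} (ha : IsSelfAdjoint a) {f : ℝ → ℝ}
    (hf : ContinuousOn f (spectrum ℝ a)) :
    cfc (fun x : ℝ => x * f x) a = a * cfc f a := by
  have h := cfc_mul id f a continuousOn_id hf
  rwa [cfc_id ℝ a] at h

/-- On nonneg elements, `cfc (x*(x+ε)^t) a = cfc ((x+ε)^t) a * a`. -/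
private lemma cfc_mul_shift {a : H →L[ℂ] H} (ha : 0 ≤ a) {ε : ℝ} (hε : 0 < ε) (t : ℝ) :
    cfc (fun x : ℝ => x * (x + ε) ^ t) a = cfc (fun x : ℝ => (x + ε) ^ t) a * a := by
  have haSA : IsSelfAdjoint a := IsSelfAdjoint.of_nonneg ha
  rw [show (fun x : ℝ => x * (x + ε) ^ t) = fun x : ℝ => (x + ε) ^ t * x by
    funext x; ring]
  exact cfc_mul_id haSA (contOn_shift_rpow ha hε t)

private lemma coe_mul_compact {c d : H →L[ℂ] H} (hd : IsCompactOperator ⇑d) :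
    IsCompactOperator ⇑(c * d) :=
  hd.continuous_comp c.continuous

private lemma coe_compact_mul {c d : H →L[ℂ] H} (hc : IsCompactOperator ⇑c) :
    IsCompactOperator ⇑(c * d) :=
  hc.comp_clm d

/-- Main approximation lemma, left version: if `a ≥ 0` and `a * b` is compact, then
`a^s * b` is compact for every `s > 0`. -/
private lemma cfc_rpow_mul_compact {a : H →L[ℂ] H} (ha : 0 ≤ a) {s : ℝ} (hs : 0 < s)
    (b : H →L[ℂ] H) (hab : IsCompactOperator ⇑(a * b)) :
    IsCompactOperator ⇑(cfc (fun x : ℝ => x ^ s) a * b) := by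
  have haSA : IsSelfAdjoint a := IsSelfAdjoint.of_nonneg ha
  rcases le_or_gt 1 s with h1 | h1
  · have hfac : cfc (fun x : ℝ => x ^ s) a = cfc (fun x : ℝ => x ^ (s - 1)) a * a := by
      rw [← cfc_mul_id haSA ((contRpowConst (by linarith : (0:ℝ) ≤ s - 1)).continuousOn)]
      exact cfc_congr fun x hx => rpow_split h1 (spectrum_nonneg_of_nonneg ha hx)
    rw [hfac, mul_assoc]
    exact coe_mul_compact hab
  · set F : ℕ → (H →L[ℂ] H) :=
      fun n => cfc (fun x : ℝ => (x + ((n : ℝ) + 1)⁻¹) ^ (s - 1)) a * (a * b) with hF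
    have hFc : ∀ n, IsCompactOperator ⇑(F n) := fun n => coe_mul_compact hab
    have hεpos : ∀ n : ℕ, (0 : ℝ) < ((n : ℝ) + 1)⁻¹ := fun n => by positivity
    have key : ∀ n : ℕ, ‖cfc (fun x : ℝ => x ^ s) a * b - F n‖ ≤ (((n : ℝ) + 1)⁻¹) ^ s * ‖b‖ := by
      intro n
      set ε : ℝ := ((n : ℝ) + 1)⁻¹
      have hε : 0 < ε := hεpos n
      have e2 : F n = cfc (fun x : ℝ => x * (x + ε) ^ (s - 1)) a * b := by
        rw [hF, cfc_mul_shift ha hε, mul_assoc]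
      rw [e2, ← sub_mul]
      calc ‖(cfc (fun x : ℝ => x ^ s) a - cfc (fun x : ℝ => x * (x + ε) ^ (s - 1)) a) * b‖
          ≤ ‖cfc (fun x : ℝ => x ^ s) a - cfc (fun x : ℝ => x * (x + ε) ^ (s - 1)) a‖ * ‖b‖ :=
            norm_mul_le _ _
        _ ≤ ε ^ s * ‖b‖ :=
            mul_le_mul_of_nonneg_right (cfc_rpow_approx ha hs h1 hε) (norm_nonneg b)
    refine isCompactOperator_of_tendsto (l := atTop) ?_ (Eventually.of_forall hFc)
    rw [tendsto_iff_norm_sub_tendsto_zero]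
    refine squeeze_zero (g := fun n : ℕ => (((n : ℝ) + 1)⁻¹) ^ s * ‖b‖)
      (fun n => norm_nonneg _) (fun n => by rw [norm_sub_rev]; exact key n) ?_
    simpa using (tendsto_eps_rpow hs).mul_const ‖b‖

/-- Main approximation lemma, right version: if `b ≥ 0` and `c * b` is compact, then
`c * b^s` is compact for every `s > 0`. -/
private lemma mul_cfc_rpow_compact {b : H →L[ℂ] H} (hb : 0 ≤ b) {s : ℝ} (hs : 0 < s)
    (c : H →L[ℂ] H) (hcb : IsCompactOperator ⇑(c * b)) :
    IsCompactOperator ⇑(c * cfc (fun x : ℝ => x ^ s) b) := by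
  have hbSA : IsSelfAdjoint b := IsSelfAdjoint.of_nonneg hb
  have hswap : ∀ {ε : ℝ}, 0 < ε → ∀ t : ℝ,
      cfc (fun x : ℝ => x * (x + ε) ^ t) b = b * cfc (fun x : ℝ => (x + ε) ^ t) b := by
    intro ε hε t
    exact id_mul_cfc hbSA (contOn_shift_rpow hb hε t)
  rcases le_or_gt 1 s with h1 | h1
  · have hfac : cfc (fun x : ℝ => x ^ s) b = b * cfc (fun x : ℝ => x ^ (s - 1)) b := by
      rw [← id_mul_cfc hbSA ((contRpowConst (by linarith : (0:ℝ) ≤ s - 1)).continuousOn)]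
      refine cfc_congr fun x hx => ?_
      rw [rpow_split h1 (spectrum_nonneg_of_nonneg hb hx)]
      ring
    rw [hfac, ← mul_assoc]
    exact coe_compact_mul hcb
  · set F : ℕ → (H →L[ℂ] H) :=
      fun n => (c * b) * cfc (fun x : ℝ => (x + ((n : ℝ) + 1)⁻¹) ^ (s - 1)) b with hF
    have hFc : ∀ n, IsCompactOperator ⇑(F n) := fun n => coe_compact_mul hcb
    have key : ∀ n : ℕ, ‖c * cfc (fun x : ℝ => x ^ s) b - F n‖ ≤ ‖c‖ * (((n : ℝ) + 1)⁻¹) ^ s := by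
      intro n
      set ε : ℝ := ((n : ℝ) + 1)⁻¹
      have hε : (0 : ℝ) < ε := by positivity
      have e2 : F n = c * cfc (fun x : ℝ => x * (x + ε) ^ (s - 1)) b := by
        rw [hF, hswap hε, ← mul_assoc]
      rw [e2, ← mul_sub]
      calc ‖c * (cfc (fun x : ℝ => x ^ s) b - cfc (fun x : ℝ => x * (x + ε) ^ (s - 1)) b)‖
          ≤ ‖c‖ * ‖cfc (fun x : ℝ => x ^ s) b - cfc (fun x : ℝ => x * (x + ε) ^ (s - 1)) b‖ :=
            norm_mul_le _ _
        _ ≤ ‖c‖ * ε ^ s :=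
            mul_le_mul_of_nonneg_left (cfc_rpow_approx hb hs h1 hε) (norm_nonneg c)
    refine isCompactOperator_of_tendsto (l := atTop) ?_ (Eventually.of_forall hFc)
    rw [tendsto_iff_norm_sub_tendsto_zero]
    refine squeeze_zero (g := fun n : ℕ => ‖c‖ * (((n : ℝ) + 1)⁻¹) ^ s)
      (fun n => norm_nonneg _) (fun n => by rw [norm_sub_rev]; exact key n) ?_
    simpa using (tendsto_eps_rpow hs).const_mul ‖c‖

/-- Compactness transfer through a paranormality-type norm inequality. -/
private lemma transfer {p r : ℝ} (hp : 0 < p) (hr : 0 < r) {f g : H →L[ℂ] H}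
    (h : ∀ z : H, ‖f z‖ ^ (p + r) ≤ ‖g z‖ ^ r * ‖z‖ ^ p)
    (hg : IsCompactOperator ⇑g) : IsCompactOperator ⇑f := by
  classical
  have hpr : 0 < p + r := by linarith
  have hiff := isCompactOperator_iff_isCompact_closure_image_closedBall (𝕜₁ := ℂ)
    (f : H →ₗ[ℂ] H) one_pos
  rw [ContinuousLinearMap.coe_coe] at hiff
  rw [hiff, isCompact_iff_totallyBounded_isComplete]
  refine ⟨?_, isClosed_closure.isComplete⟩
  refine TotallyBounded.closure ?_
  have hgtb : TotallyBounded (⇑g '' closedBall 0 1) := by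
    have hg' : IsCompactOperator ⇑(g : H →ₗ[ℂ] H) := by
      rwa [ContinuousLinearMap.coe_coe]
    obtain ⟨K, hK, hsub⟩ := hg'.image_closedBall_subset_compact (𝕜₁ := ℂ) 1
    rw [ContinuousLinearMap.coe_coe] at hsub
    exact hK.totallyBounded.subset hsub
  rw [Metric.totallyBounded_iff]
  intro ε hε
  obtain ⟨δ, hδ0, hδ⟩ : ∃ δ > 0, δ ^ r * 2 ^ p < ε ^ (p + r) := by
    have hεp : 0 < ε ^ (p + r) := Real.rpow_pos_of_pos hε _
    have hc : Tendsto (fun δ : ℝ => δ ^ r * (2 : ℝ) ^ p) (𝓝[>] 0) (𝓝 0) := by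
      have h0 : Tendsto (fun δ : ℝ => δ ^ r * (2 : ℝ) ^ p) (𝓝 0) (𝓝 ((0:ℝ) ^ r * 2 ^ p)) :=
        ((contRpowConst hr.le).tendsto 0).mul_const _
      rw [Real.zero_rpow hr.ne', zero_mul] at h0
      exact h0.mono_left nhdsWithin_le_nhds
    have h1 : ∀ᶠ δ in 𝓝[>] (0 : ℝ), δ ^ r * 2 ^ p < ε ^ (p + r) :=
      hc.eventually_lt_const hεp
    have h2 : ∀ᶠ δ in 𝓝[>] (0 : ℝ), 0 < δ :=
      eventually_mem_nhdsWithin.mono fun δ hδ => hδ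
    obtain ⟨δ, hδ1, hδ2⟩ := (h2.and h1).exists
    exact ⟨δ, hδ1, hδ2⟩
  obtain ⟨t, hts, htfin, htcover⟩ := finite_approx_of_totallyBounded hgtb δ hδ0
  choose! preim hpre1 hpre2 using fun y (hy : y ∈ ⇑g '' closedBall (0 : H) 1) => hy
  refine ⟨(⇑f ∘ preim) '' t, htfin.image _, ?_⟩
  rintro - ⟨x, hx, rfl⟩
  have hgx : g x ∈ ⋃ y ∈ t, ball y δ := htcover ⟨x, hx, rfl⟩
  rw [Set.mem_iUnion₂] at hgx
  obtain ⟨y, hyt, hxy⟩ := hgx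
  have hyim : y ∈ ⇑g '' closedBall (0 : H) 1 := hts hyt
  have hx₀ : preim y ∈ closedBall (0 : H) 1 := hpre1 y hyim
  have hgx₀ : g (preim y) = y := hpre2 y hyim
  rw [Set.mem_iUnion₂]
  refine ⟨f (preim y), Set.mem_image_of_mem _ hyt, ?_⟩
  rw [mem_ball, dist_eq_norm]
  set x₀ := preim y
  have h2 : ‖g x - g x₀‖ ≤ δ := by
    rw [← hgx₀] at hxy
    rw [mem_ball, dist_eq_norm] at hxy
    exact hxy.le
  have h3 : ‖x - x₀‖ ≤ 2 := by
    rw [mem_closedBall, dist_zero_right] at hx hx₀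
    calc ‖x - x₀‖ ≤ ‖x‖ + ‖x₀‖ := norm_sub_le _ _
      _ ≤ 2 := by linarith
  have h1 : ‖f x - f x₀‖ ^ (p + r) ≤ ‖g x - g x₀‖ ^ r * ‖x - x₀‖ ^ p := by
    simpa [map_sub] using h (x - x₀)
  have h4 : ‖f x - f x₀‖ ^ (p + r) < ε ^ (p + r) := by
    refine lt_of_le_of_lt (h1.trans ?_) hδ
    have e1 : ‖g x - g x₀‖ ^ r ≤ δ ^ r := Real.rpow_le_rpow (norm_nonneg _) h2 hr.le
    have e2 : ‖x - x₀‖ ^ p ≤ 2 ^ p := Real.rpow_le_rpow (norm_nonneg _) h3 hp.le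
    exact mul_le_mul e1 e2 (Real.rpow_nonneg (norm_nonneg _) p) (Real.rpow_nonneg hδ0.le r)
  by_contra hcon
  push_neg at hcon
  exact absurd h4 (not_lt.2 (Real.rpow_le_rpow hε.le hcon hpr.le))

end Aux

theorem stmt_11 (p r : ℝ) (hp : 0 < p) (hr : 0 < r) (T : H →L[ℂ] H)
    (hT : AbsPRParanormal p r T)
    (hcpt : IsCompactOperator ⇑(T ^ 2)) :
    IsCompactOperator ⇑T := by
  classical
  set a : H →L[ℂ] H := adjoint T * T with ha_def
  set b : H →L[ℂ] H := T * adjoint T with hb_def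
  have ha : (0 : H →L[ℂ] H) ≤ a := by
    rw [ha_def, ← ContinuousLinearMap.star_eq_adjoint]
    exact star_mul_self_nonneg T
  have hb : (0 : H →L[ℂ] H) ≤ b := by
    have : b = star (adjoint T) * adjoint T := by
      rw [ContinuousLinearMap.star_eq_adjoint, adjoint_adjoint]
    rw [this]
    exact star_mul_self_nonneg _
  have haSA : IsSelfAdjoint a := IsSelfAdjoint.of_nonneg ha
  have hbSA : IsSelfAdjoint b := IsSelfAdjoint.of_nonneg hb
  -- identify `opPow (opAbs _) s` with a direct cfc of `a` resp. `b`
  have hPow : ∀ (c : H →L[ℂ] H), 0 ≤ c → ∀ s : ℝ, 0 < s →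
      opPow (cfc Real.sqrt c) s = cfc (fun x : ℝ => x ^ (s / 2)) c := by
    intro c hc s hs
    have hcSA : IsSelfAdjoint c := IsSelfAdjoint.of_nonneg hc
    unfold opPow
    rw [← cfc_comp (fun x : ℝ => x ^ s) Real.sqrt c hcSA
      ((contRpowConst hs.le).continuousOn) (Real.continuous_sqrt.continuousOn)]
    refine cfc_congr fun x hx => ?_
    have h0 : (0 : ℝ) ≤ x := spectrum_nonneg_of_nonneg hc hx
    simp only [Function.comp_apply]
    rw [Real.sqrt_eq_rpow, ← Real.rpow_mul h0, show 1 / 2 * s = s / 2 by ring]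
  have hP : opPow (opAbs T) p = cfc (fun x : ℝ => x ^ (p / 2)) a := by
    unfold opAbs
    exact hPow a ha p hp
  have hR : opPow (opAbs (adjoint T)) r = cfc (fun x : ℝ => x ^ (r / 2)) b := by
    have e : opAbs (adjoint T) = cfc Real.sqrt b := by
      unfold opAbs
      rw [adjoint_adjoint]
    rw [e]
    exact hPow b hb r hr
  set P : H →L[ℂ] H := cfc (fun x : ℝ => x ^ (p / 2)) a with hPdef
  set R : H →L[ℂ] H := cfc (fun x : ℝ => x ^ (r / 2)) b with hRdef
  -- `a * b` is compact
  have hab : IsCompactOperator ⇑(a * b) := by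
    have e : a * b = adjoint T * ((T ^ 2) * adjoint T) := by
      rw [ha_def, hb_def, pow_two]
      simp only [mul_assoc]
    rw [e]
    exact coe_mul_compact (coe_compact_mul hcpt)
  -- hence `P * R` is compact
  have hPb : IsCompactOperator ⇑(P * b) :=
    cfc_rpow_mul_compact ha (by positivity) b hab
  have hPR : IsCompactOperator ⇑(P * R) :=
    mul_cfc_rpow_compact hb (by positivity) P hPb
  -- homogeneous form of the paranormality inequality
  have hineq : ∀ z : H, ‖R z‖ ^ (p + r) ≤ ‖(P * R) z‖ ^ r * ‖z‖ ^ p := by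
    intro z
    rcases eq_or_ne z 0 with rfl | hz
    · rw [map_zero, norm_zero, Real.zero_rpow (by positivity : (0:ℝ) < p + r).ne']
      positivity
    · have hz0 : (0 : ℝ) < ‖z‖ := norm_pos_iff.2 hz
      set c : ℂ := (‖z‖ : ℂ)⁻¹ with hc_def
      have hc_norm : ‖c‖ = ‖z‖⁻¹ := by
        rw [hc_def, norm_inv, Complex.norm_real, Real.norm_eq_abs, abs_of_nonneg hz0.le]
      have hu : ‖c • z‖ = 1 := by
        rw [norm_smul, hc_norm]
        field_simp
      have h := hT (c • z) hu
      rw [hR, hP] at h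
      have e1 : ‖cfc (fun x : ℝ => x ^ (r / 2)) b (c • z)‖ = ‖z‖⁻¹ * ‖R z‖ := by
        rw [← hRdef, map_smul, norm_smul, hc_norm]
      have e2 : ‖cfc (fun x : ℝ => x ^ (p / 2)) a (cfc (fun x : ℝ => x ^ (r / 2)) b (c • z))‖
          = ‖z‖⁻¹ * ‖(P * R) z‖ := by
        rw [← hRdef, ← hPdef, map_smul, map_smul, norm_smul, hc_norm, ContinuousLinearMap.mul_apply]
      rw [e1, e2] at h
      have hinv : (0 : ℝ) ≤ ‖z‖⁻¹ := by positivity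
      calc ‖R z‖ ^ (p + r)
          = (‖z‖ * (‖z‖⁻¹ * ‖R z‖)) ^ (p + r) := by
            congr 1
            field_simp
        _ = ‖z‖ ^ (p + r) * (‖z‖⁻¹ * ‖R z‖) ^ (p + r) :=
            Real.mul_rpow hz0.le (by positivity)
        _ ≤ ‖z‖ ^ (p + r) * (‖z‖⁻¹ * ‖(P * R) z‖) ^ r := by
            refine mul_le_mul_of_nonneg_left h (Real.rpow_nonneg hz0.le _)
        _ = ‖z‖ ^ (p + r) * ((‖z‖ ^ r)⁻¹ * ‖(P * R) z‖ ^ r) := by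
            rw [Real.mul_rpow hinv (norm_nonneg _), Real.inv_rpow hz0.le]
        _ = ‖(P * R) z‖ ^ r * ‖z‖ ^ p := by
            rw [show p = (p + r) - r by ring, Real.rpow_sub hz0]
            field_simp
            ring
  -- so `R` is compact by the transfer lemma
  have hRcpt : IsCompactOperator ⇑R := transfer hp hr hineq hPR
  -- from `R` compact, deduce `b` compact
  have hRpos : (0 : H →L[ℂ] H) ≤ R :=
    cfc_nonneg fun x hx => Real.rpow_nonneg (spectrum_nonneg_of_nonneg hb hx) _
  have hbcpt : IsCompactOperator ⇑b := by
    have h1 : IsCompactOperator ⇑(cfc (fun x : ℝ => x ^ (2 / r)) R * 1) :=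
      cfc_rpow_mul_compact hRpos (by positivity) 1 (by rwa [mul_one])
    rw [mul_one] at h1
    have h2 : cfc (fun x : ℝ => x ^ (2 / r)) R = b := by
      rw [hRdef, ← cfc_comp (fun x : ℝ => x ^ (2 / r)) (fun x : ℝ => x ^ (r / 2)) b hbSA
        ((contRpowConst (by positivity)).continuousOn)
        ((contRpowConst (by positivity)).continuousOn)]
      conv_rhs => rw [← cfc_id ℝ b]
      refine cfc_congr fun x hx => ?_
      have h0 : (0 : ℝ) ≤ x := spectrum_nonneg_of_nonneg hb hx
      simp only [Function.comp_apply, id_eq]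
      rw [← Real.rpow_mul h0]
      rw [show r / 2 * (2 / r) = 1 by field_simp, Real.rpow_one]
    rwa [h2] at h1
  -- from `b` compact, deduce `a` compact
  have haa : IsCompactOperator ⇑(a * a) := by
    have e : a * a = adjoint T * (b * T) := by
      rw [ha_def, hb_def]
      simp only [mul_assoc]
    rw [e]
    exact coe_mul_compact (coe_compact_mul hbcpt)
  have haa_pos : (0 : H →L[ℂ] H) ≤ a * a := by
    have : a * a = star a * a := by rw [haSA.star_eq]
    rw [this]
    exact star_mul_self_nonneg a
  have hacpt : IsCompactOperator ⇑a := by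
    have h1 : IsCompactOperator ⇑(cfc (fun x : ℝ => x ^ ((1 : ℝ) / 2)) (a * a) * 1) :=
      cfc_rpow_mul_compact haa_pos one_half_pos 1 (by rwa [mul_one])
    rw [mul_one] at h1
    have h2 : cfc (fun x : ℝ => x ^ ((1 : ℝ) / 2)) (a * a) = a := by
      have e : cfc (fun x : ℝ => x * x) a = a * a := by
        have h := cfc_mul (id : ℝ → ℝ) (id : ℝ → ℝ) a continuousOn_id continuousOn_id
        rwa [cfc_id ℝ a] at h
      rw [← e, ← cfc_comp (fun x : ℝ => x ^ ((1 : ℝ) / 2)) (fun x : ℝ => x * x) a haSA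
        ((contRpowConst (by norm_num)).continuousOn)
        ((continuous_id.mul continuous_id).continuousOn)]
      conv_rhs => rw [← cfc_id ℝ a]
      refine cfc_congr fun x hx => ?_
      have h0 : (0 : ℝ) ≤ x := spectrum_nonneg_of_nonneg ha hx
      simp only [Function.comp_apply, id_eq]
      rw [show x * x = x ^ (2 : ℝ) by rw [show (2:ℝ) = ((2:ℕ):ℝ) by norm_num, Real.rpow_natCast]; ring]
      rw [← Real.rpow_mul h0]
      norm_num
    rwa [h2] at h1
  -- finally transfer compactness from `a` to `T`
  have hfin : ∀ z : H, ‖T z‖ ^ ((1 : ℝ) + 1) ≤ ‖a z‖ ^ (1 : ℝ) * ‖z‖ ^ (1 : ℝ) := by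
    intro z
    rw [Real.rpow_one, Real.rpow_one]
    have h1 : (inner ℂ (a z) z : ℂ) = inner ℂ (T z) (T z) := by
      rw [ha_def, ContinuousLinearMap.mul_apply, adjoint_inner_left]
    have h2 : ‖T z‖ * ‖T z‖ = RCLike.re (inner ℂ (a z) z : ℂ) := by
      rw [h1, inner_self_eq_norm_mul_norm]
    have h3 : RCLike.re (inner ℂ (a z) z : ℂ) ≤ ‖(inner ℂ (a z) z : ℂ)‖ := RCLike.re_le_norm _
    have h4 : ‖(inner ℂ (a z) z : ℂ)‖ ≤ ‖a z‖ * ‖z‖ := norm_inner_le_norm _ _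
    have h5 : ‖T z‖ * ‖T z‖ ≤ ‖a z‖ * ‖z‖ := by linarith
    calc ‖T z‖ ^ ((1 : ℝ) + 1) = ‖T z‖ * ‖T z‖ := by
          rw [show (1 : ℝ) + 1 = ((2 : ℕ) : ℝ) by norm_num, Real.rpow_natCast]
          ring
      _ ≤ ‖a z‖ * ‖z‖ := h5
  exact transfer one_pos one_pos hfin hacpt
end

section
/- Let H be a complex Hilbert space and V a bounded linear operator on H that is a partial isometry. Then V is quasinormal (V(V*V) = (V*V)V) if and only if there exist p, r > 0 such that V is absolute-(p,r)-paranormal. -/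
open ContinuousLinearMap

variable {H : Type*} [NormedAddCommGroup H] [InnerProductSpace ℂ H] [CompleteSpace H]

/-- The spectrum of an idempotent is contained in `{0, 1}`. -/
lemma proj_spectrum (P : H →L[ℂ] H) (h2 : P * P = P) : spectrum ℝ P ⊆ {0, 1} := by
  intro t ht
  by_contra hmem
  simp only [Set.mem_insert_iff, Set.mem_singleton_iff, not_or] at hmem
  obtain ⟨h0, h1⟩ := hmem
  have h1' : t - 1 ≠ 0 := sub_ne_zero.mpr h1
  rw [spectrum.mem_iff] at ht
  apply ht
  refine ⟨⟨_, (t)⁻¹ • ((1 : H →L[ℂ] H) - P) + (t - 1)⁻¹ • P, ?_, ?_⟩, rfl⟩ <;>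
  · simp only [Algebra.algebraMap_eq_smul_one, mul_add, add_mul, sub_mul, mul_sub,
      smul_mul_assoc, mul_smul_comm, one_mul, mul_one, h2, smul_smul]
    match_scalars <;> field_simp <;> ring

/-- `cfc` of a function fixing `0` and `1` fixes a self-adjoint idempotent. -/
lemma cfc_proj_fix (P : H →L[ℂ] H) (h2 : P * P = P) (hsa : IsSelfAdjoint P)
    (f : ℝ → ℝ) (hf0 : f 0 = 0) (hf1 : f 1 = 1) : cfc f P = P := by
  rw [show cfc f P = cfc (id : ℝ → ℝ) P from cfc_congr fun x hx => by
    rcases proj_spectrum P h2 hx with h | h <;> simp_all]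
  exact cfc_id ℝ P

lemma proj_norm_facts (P : H →L[ℂ] H) (h2 : P * P = P) (hsa : IsSelfAdjoint P) (x : H) :
    ‖P x‖ ≤ ‖x‖ ∧ (‖P x‖ = ‖x‖ → P x = x) := by
  have hadj : adjoint P = P := hsa.adjoint_eq
  have hPP : P (P x) = P x := by rw [← ContinuousLinearMap.mul_apply, h2]
  have key : (‖P x‖ : ℝ) ^ 2 = RCLike.re (inner ℂ x (P x) : ℂ) := by
    rw [show (inner ℂ x (P x) : ℂ) = inner ℂ (P x) (P x) by
      rw [← hPP, ← adjoint_inner_left, hadj, hPP]]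
    rw [inner_self_eq_norm_sq]
  have hcs : RCLike.re (inner ℂ x (P x) : ℂ) ≤ ‖x‖ * ‖P x‖ := by
    calc RCLike.re (inner ℂ x (P x) : ℂ) ≤ ‖(inner ℂ x (P x) : ℂ)‖ := RCLike.re_le_norm _
      _ ≤ ‖x‖ * ‖P x‖ := norm_inner_le_norm _ _
  have hle : ‖P x‖ ≤ ‖x‖ := by
    rcases eq_or_lt_of_le (norm_nonneg (P x)) with h | h
    · rw [← h]; exact norm_nonneg x
    · nlinarith
  refine ⟨hle, fun heq => ?_⟩
  have hz : ‖x - P x‖ ^ 2 = 0 := by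
    rw [@norm_sub_sq ℂ, ← key, heq]; ring
  have := pow_eq_zero_iff two_ne_zero |>.mp hz
  rw [norm_eq_zero, sub_eq_zero] at this
  exact this.symm

theorem stmt_14 (V : H →L[ℂ] H) (hV : V * adjoint V * V = V) :
    V * (adjoint V * V) = (adjoint V * V) * V ↔
      ∃ p r : ℝ, 0 < p ∧ 0 < r ∧ AbsPRParanormal p r V := by
  set P : H →L[ℂ] H := adjoint V * V with hPdef
  set Q : H →L[ℂ] H := V * adjoint V with hQdef
  have hP2 : P * P = P := by
    rw [hPdef, mul_assoc, ← mul_assoc V (adjoint V) V, hV]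
  have hQ2 : Q * Q = Q := by
    rw [hQdef, ← mul_assoc, hV]
  have hPsa : IsSelfAdjoint P := by
    rw [IsSelfAdjoint, star_mul, star_eq_adjoint, star_eq_adjoint, adjoint_adjoint]
  have hQsa : IsSelfAdjoint Q := by
    rw [IsSelfAdjoint, star_mul, star_eq_adjoint, star_eq_adjoint, adjoint_adjoint]
  have hAbsV : opAbs V = P :=
    cfc_proj_fix P hP2 hPsa Real.sqrt Real.sqrt_zero Real.sqrt_one
  have hAbsV' : opAbs (adjoint V) = Q := by
    rw [opAbs, adjoint_adjoint]
    exact cfc_proj_fix Q hQ2 hQsa Real.sqrt Real.sqrt_zero Real.sqrt_one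
  have hPowP : ∀ s : ℝ, 0 < s → opPow P s = P := fun s hs =>
    cfc_proj_fix P hP2 hPsa _ (Real.zero_rpow (ne_of_gt hs)) (Real.one_rpow s)
  have hPowQ : ∀ s : ℝ, 0 < s → opPow Q s = Q := fun s hs =>
    cfc_proj_fix Q hQ2 hQsa _ (Real.zero_rpow (ne_of_gt hs)) (Real.one_rpow s)
  have hVP : V * P = V := by rw [hPdef, ← mul_assoc, hV]
  have hQV : Q * V = V := hV
  constructor
  · intro h
    have hPV : P * V = V := by rw [← h]; exact hVP
    have hPQ : P * Q = Q := by rw [hQdef, ← mul_assoc, hPV]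
    refine ⟨1, 1, one_pos, one_pos, fun x hx => ?_⟩
    rw [hAbsV, hAbsV', hPowP 1 one_pos, hPowQ 1 one_pos]
    have hfix : P (Q x) = Q x := by
      rw [← ContinuousLinearMap.mul_apply, hPQ]
    rw [hfix]
    have hle1 : ‖Q x‖ ≤ 1 := hx ▸ (proj_norm_facts Q hQ2 hQsa x).1
    rcases eq_or_lt_of_le (norm_nonneg (Q x)) with h0 | h0
    · rw [← h0, Real.zero_rpow (by norm_num), Real.zero_rpow one_ne_zero]
    · exact Real.rpow_le_rpow_of_exponent_ge h0 hle1 (by norm_num)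
  · rintro ⟨p, r, hp, hr, hpara⟩
    have hPQ : P * Q = Q := by
      ext y
      rw [ContinuousLinearMap.mul_apply]
      by_cases hy : Q y = 0
      · rw [hy, map_zero]
      · set u : H := ‖Q y‖⁻¹ • Q y with hu
        have hny : (0 : ℝ) < ‖Q y‖ := norm_pos_iff.mpr hy
        have hun : ‖u‖ = 1 := by
          rw [hu, norm_smul, norm_inv, norm_norm, inv_mul_cancel₀ (ne_of_gt hny)]
        have hQu : Q u = u := by
          rw [hu, map_smul_of_tower, ← ContinuousLinearMap.mul_apply, hQ2]
        have := hpara u hun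
        rw [hAbsV, hAbsV', hPowP p hp, hPowQ r hr, hQu, hun, Real.one_rpow] at this
        have hPu_le : ‖P u‖ ≤ 1 := hun ▸ (proj_norm_facts P hP2 hPsa u).1
        have hPu_eq : ‖P u‖ = 1 := by
          by_contra hne
          have hlt : ‖P u‖ < 1 := lt_of_le_of_ne hPu_le hne
          have := lt_of_le_of_lt this (Real.rpow_lt_one (norm_nonneg _) hlt hr)
          exact lt_irrefl _ this
        have hfix : P u = u := (proj_norm_facts P hP2 hPsa u).2 (hPu_eq.trans hun.symm)
        rw [hu, map_smul_of_tower] at hfix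
        have := congrArg (‖Q y‖ • ·) hfix
        simpa [smul_smul, mul_inv_cancel₀ (ne_of_gt hny)] using this
    have hPV : P * V = V := by
      rw [← hQV, ← mul_assoc, hPQ]
    rw [hVP, hPV]
end

section
/- Let H be a complex Hilbert space and V a bounded linear operator on H that is a partial isometry. Then V is quasinormal (V(V*V) = (V*V)V) if and only if (V*)²V² ≥ V*V, i.e., (V*)²V² − V*V is a positive operator. -/
open ContinuousLinearMap

variable {H : Type*} [NormedAddCommGroup H] [InnerProductSpace ℂ H] [CompleteSpace H]

theorem stmt_16 (V : H →L[ℂ] H) (hV : V * adjoint V * V = V) :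
    V * (adjoint V * V) = (adjoint V * V) * V ↔
      (adjoint V ^ 2 * V ^ 2 - adjoint V * V).IsPositive := by
  have hV' : V * (adjoint V * V) = V := by rw [← mul_assoc]; exact hV
  have hVs : V * star V * V = V := by rw [star_eq_adjoint]; exact hV
  constructor
  · intro h
    have hPV : (adjoint V * V) * V = V := h ▸ hV'
    have key : adjoint V ^ 2 * V ^ 2 = adjoint V * V := by
      calc adjoint V ^ 2 * V ^ 2 = adjoint V * ((adjoint V * V) * V) := by
            rw [pow_two, pow_two]; noncomm_ring
        _ = adjoint V * V := by rw [hPV]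
    rw [key, sub_self]
    exact isPositive_zero
  · intro h
    set W : H →L[ℂ] H := V - (adjoint V * V) * V with hW
    have hkey : adjoint W * W = adjoint V * V - adjoint V ^ 2 * V ^ 2 := by
      have hWs : adjoint W = star V - star V * star V * V := by
        rw [hW, ← star_eq_adjoint, ← star_eq_adjoint, star_sub, star_mul, star_mul, star_star]
        noncomm_ring
      rw [hWs, hW, ← star_eq_adjoint]
      calc (star V - star V * star V * V) * (V - star V * V * V)
          = star V * V - star V * star V * (V * V) - (star V * star V * (V * V)
              - star V * star V * ((V * star V * V) * V)) := by noncomm_ring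
        _ = star V * V - star V ^ 2 * V ^ 2 := by rw [hVs]; rw [pow_two, pow_two]; noncomm_ring
    have hD : adjoint V ^ 2 * V ^ 2 - adjoint V * V = -(adjoint W * W) := by
      rw [hkey, neg_sub]
    have hW0 : W = 0 := by
      ext x
      have h1 := h.inner_nonneg_left x
      rw [hD] at h1
      have h2 : RCLike.re (inner ℂ ((adjoint W * W) x) x) = ‖W x‖ ^ 2 := by
        rw [ContinuousLinearMap.mul_apply, adjoint_inner_left, ← @inner_self_eq_norm_sq ℂ]
      simp only [neg_apply, inner_neg_left, map_neg] at h1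
      have hle : ‖W x‖ ^ 2 ≤ 0 := by
        have h1' := (RCLike.nonneg_iff.mp h1).1
        rw [map_neg] at h1'
        rw [← h2]; linarith
      have : ‖W x‖ = 0 := by nlinarith [norm_nonneg (W x)]
      simpa [norm_eq_zero] using this
    have hPV : (adjoint V * V) * V = V := by
      have := sub_eq_zero.mp hW0
      exact this.symm
    rw [hV', hPV]
end
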